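/- Let n ≥ 1, l ∈ [0,2n], and 𝐚 = (a_1,…,a_l) a strictly increasing sequence of integers in [1,2n]. Then: (1) if a_l ∈ Rem(𝐚), then a_l is even; (2) if a_l ∉ Rem(𝐚), then Rem(𝐚) = Rem(a_1,…,a_{l−1}); (3) if a_l ∈ Rem(𝐚), then Rem(a_1,…,a_{l−1}) = Rem(a_1,…,a_{l−2}); (4) Rem(a_1,…,a_k) ⊆ Rem(𝐚) for all k ∈ [0,l]. -/

import Mathlib

/-- `remAux` computes the set of removable entries of a strictly increasing
sequence, given as a list in *reversed* order (so the head is the last entry). -/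
def remAux : List ℕ → Finset ℕ
  | [] => ∅
  | [_] => ∅
  | b :: a :: rest =>
    if Even b ∧ a + 1 = b ∧ b + (remAux rest).card + 1 < 2 * (rest.length + 2) then
      insert a (insert b (remAux rest))
    else remAux (a :: rest)

/-- `remSet 𝐚` : the set `Rem(𝐚)` of removable entries of the strictly
increasing sequence `𝐚 = (a_1, …, a_l)` (given in its natural order). -/
def remSet (l : List ℕ) : Finset ℕ := remAux l.reverse

lemma mem_of_mem_remAux : ∀ r : List ℕ, ∀ x ∈ remAux r, x ∈ r := by
  intro r
  induction r using remAux.induct with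
  | case1 => simp [remAux]
  | case2 => simp [remAux]
  | case3 b a rest hc ih =>
    intro x hx
    rw [remAux, if_pos hc] at hx
    simp only [Finset.mem_insert] at hx
    rcases hx with rfl | rfl | hx <;> simp_all
  | case4 b a rest hc ih1 ih2 =>
    intro x hx
    rw [remAux, if_neg hc] at hx
    have := ih2 x hx
    simp_all

lemma remAux_head_even {b : ℕ} {t : List ℕ} (hp : (b :: t).Pairwise (· > ·))
    (h : b ∈ remAux (b :: t)) : Even b := by
  match t with
  | [] => simp [remAux] at h
  | [a] =>
    rw [remAux] at h
    split at h
    · exact ‹_ ∧ _›.1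
    · simp [remAux] at h
  | a :: c :: rest =>
    rw [remAux] at h
    split at h
    · exact ‹_ ∧ _›.1
    · exfalso
      have hmem := mem_of_mem_remAux _ _ h
      have := (List.pairwise_cons.1 hp).1 b hmem
      omega

lemma remAux_not_mem {b : ℕ} {t : List ℕ}
    (h : b ∉ remAux (b :: t)) : remAux (b :: t) = remAux t := by
  match t with
  | [] => simp [remAux]
  | a :: rest =>
    rw [remAux]
    split
    · exfalso; apply h; rw [remAux, if_pos ‹_›]; simp
    · rfl

lemma remAux_cons_subset {b : ℕ} {t : List ℕ} (hp : (b :: t).Pairwise (· > ·)) :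
    remAux t ⊆ remAux (b :: t) := by
  match t with
  | [] => simp [remAux]
  | a :: rest =>
    rw [remAux]
    split
    · rename_i hc
      have hodd : ¬ Even a := by
        obtain ⟨he, hab, _⟩ := hc
        intro ha; rw [← hab] at he; simp [Nat.even_add_one] at he; exact (Nat.not_even_iff_odd.mpr he) ha
      have hnm : a ∉ remAux (a :: rest) := fun hm =>
        hodd (remAux_head_even (List.pairwise_cons.1 hp).2 hm)
      rw [remAux_not_mem hnm]
      intro x hx
      simp [Finset.mem_insert, hx]
    · exact subset_rfl

lemma remAux_mem_tail {b : ℕ} {t : List ℕ} (hp : (b :: t).Pairwise (· > ·))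
    (h : b ∈ remAux (b :: t)) : remAux t = remAux t.tail := by
  match t with
  | [] => simp
  | a :: rest =>
    rw [remAux] at h
    split at h
    · rename_i hc
      have hodd : ¬ Even a := by
        obtain ⟨he, hab, _⟩ := hc
        intro ha; rw [← hab] at he; simp [Nat.even_add_one] at he; exact (Nat.not_even_iff_odd.mpr he) ha
      have hnm : a ∉ remAux (a :: rest) := fun hm =>
        hodd (remAux_head_even (List.pairwise_cons.1 hp).2 hm)
      exact remAux_not_mem hnm
    · exfalso
      have hmem := mem_of_mem_remAux _ _ h
      have := (List.pairwise_cons.1 hp).1 b hmem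
      omega

lemma remAux_drop_subset {r : List ℕ} (hp : r.Pairwise (· > ·)) (m : ℕ) :
    remAux (r.drop m) ⊆ remAux r := by
  induction r generalizing m with
  | nil => simp
  | cons b t ih =>
    match m with
    | 0 => exact subset_rfl
    | m + 1 =>
      simp only [List.drop_succ_cons]
      exact (ih (List.pairwise_cons.1 hp).2 m).trans (remAux_cons_subset hp)

theorem stmt4 (n : ℕ) (hn : 1 ≤ n) (a : List ℕ)
    (hinc : a.Chain' (· < ·)) (hbd : ∀ x ∈ a, 1 ≤ x ∧ x ≤ 2 * n)
    (hlen : a.length ≤ 2 * n) :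
    (∀ h : a ≠ [], a.getLast h ∈ remSet a → Even (a.getLast h)) ∧
    (∀ h : a ≠ [], a.getLast h ∉ remSet a → remSet a = remSet a.dropLast) ∧
    (∀ h : a ≠ [], a.getLast h ∈ remSet a →
      remSet a.dropLast = remSet a.dropLast.dropLast) ∧
    (∀ k ≤ a.length, remSet (a.take k) ⊆ remSet a) := by
  have hrev : a.reverse.Pairwise (· > ·) := by
    rw [List.pairwise_reverse]
    exact (List.isChain_iff_pairwise.1 hinc).imp fun h => h
  have hkey : ∀ h : a ≠ [], a.reverse = a.getLast h :: a.dropLast.reverse := by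
    intro h
    conv_lhs => rw [← List.dropLast_append_getLast h]
    simp
  refine ⟨?_, ?_, ?_, ?_⟩
  · intro h hm
    rw [remSet, hkey h] at hm
    rw [hkey h] at hrev
    exact remAux_head_even hrev hm
  · intro h hm
    rw [remSet, hkey h] at hm ⊢
    rw [remSet, ← List.tail_reverse, hkey h]
    exact remAux_not_mem hm
  · intro h hm
    rw [remSet, hkey h] at hm
    rw [hkey h] at hrev
    rw [remSet, remSet, ← List.tail_reverse,
      ← List.tail_reverse, ← List.tail_reverse,
      hkey h]
    exact remAux_mem_tail hrev hm
  · intro k hk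
    rw [remSet, remSet, List.reverse_take]
    exact remAux_drop_subset hrev _
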